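/- Let E be a meet-semilattice with bottom ⊥, X ⊆ E × Finset E, B a generalized Boolean algebra, and φ : E → B an X-to-join representation. Let KO denote the collection of compact open subsets of the space \hat{E}_X of X-to-join characters. Then there exists a unique function ψ : KO → B satisfying ψ(∅) = ⊥, ψ(U ∪ V) = ψ(U) ⊔ ψ(V), ψ(U ∩ V) = ψ(U) ⊓ ψ(V), ψ(U \ V) = ψ(U) \ ψ(V) for all U, V ∈ KO, and ψ(M_a) = φ(a) for all a ∈ E; moreover this ψ is proper, i.e. for every b ∈ B there exists U ∈ KO with b ≤ ψ(U). (Theorem 3.3: the universal property of the X-to-join Booleanization B_X(E).) -/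

import Mathlib

/-- The set of `X`-to-join characters of a meet-semilattice `E` with bottom. -/
def XtoJoinChars {E : Type*} [SemilatticeInf E] [OrderBot E]
    (X : Set (E × Finset E)) : Set (E → Bool) :=
  {φ | φ ⊥ = false ∧ (∀ x y : E, φ (x ⊓ y) = (φ x && φ y)) ∧ (∃ x : E, φ x = true) ∧
    ∀ p ∈ X, (φ p.1 = true ↔ ∃ f ∈ p.2, φ f = true)}

/-- The basic set `M_a = {φ ∈ Ê_X : φ(a) = true}`. -/
def Mset {E : Type*} [SemilatticeInf E] [OrderBot E]
    (X : Set (E × Finset E)) (a : E) : Set (XtoJoinChars X) :=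
  {φ | (φ : E → Bool) a = true}

/-- The compact open subsets of the character space `Ê_X`. -/
def CompactOpens {E : Type*} [SemilatticeInf E] [OrderBot E]
    (X : Set (E × Finset E)) :=
  {U : Set (XtoJoinChars X) // IsCompact U ∧ IsOpen U}

/-- `ψ : KO(Ê_X) → B` sends `∅` to `⊥`, unions to joins, intersections to meets,
set differences to relative complements, and `M_a` to `φ a`. -/
def IsBooleanizationMap {E B : Type*} [SemilatticeInf E] [OrderBot E]
    [GeneralizedBooleanAlgebra B] (X : Set (E × Finset E)) (φ : E → B)
    (ψ : CompactOpens X → B) : Prop :=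
  (∀ W : CompactOpens X, W.1 = (∅ : Set (XtoJoinChars X)) → ψ W = ⊥) ∧
  (∀ U V W : CompactOpens X, W.1 = U.1 ∪ V.1 → ψ W = ψ U ⊔ ψ V) ∧
  (∀ U V W : CompactOpens X, W.1 = U.1 ∩ V.1 → ψ W = ψ U ⊓ ψ V) ∧
  (∀ U V W : CompactOpens X, W.1 = U.1 \ V.1 → ψ W = ψ U \ ψ V) ∧
  (∀ (a : E) (W : CompactOpens X), W.1 = Mset X a → ψ W = φ a)


section Filters
variable {B : Type*} [GeneralizedBooleanAlgebra B]

/-- A proper prime filter on a generalized Boolean algebra. -/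
structure IsPrimeF (F : Set B) : Prop where
  up : ∀ ⦃x⦄, x ∈ F → ∀ ⦃y⦄, x ≤ y → y ∈ F
  inf_mem : ∀ ⦃x⦄, x ∈ F → ∀ ⦃y⦄, y ∈ F → x ⊓ y ∈ F
  proper : ⊥ ∉ F
  prime : ∀ ⦃x y⦄, x ⊔ y ∈ F → x ∈ F ∨ y ∈ F

theorem exists_primeF (b : B) (hb : b ≠ ⊥) : ∃ F : Set B, IsPrimeF F ∧ b ∈ F := by
  classical
  set S : Set (Set B) := {F | b ∈ F ∧ (∀ ⦃x⦄, x ∈ F → ∀ ⦃y⦄, x ≤ y → y ∈ F) ∧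
    (∀ ⦃x⦄, x ∈ F → ∀ ⦃y⦄, y ∈ F → x ⊓ y ∈ F) ∧ ⊥ ∉ F} with hS
  have hbase : {x : B | b ≤ x} ∈ S := by
    refine ⟨le_refl b, fun x hx y hxy => le_trans hx hxy, fun x hx y hy => le_inf hx hy, ?_⟩
    simp only [Set.mem_setOf_eq, le_bot_iff]
    exact hb
  have hchain : ∀ c ⊆ S, IsChain (fun x1 x2 => x1 ⊆ x2) c → c.Nonempty →
      ∃ ub ∈ S, ∀ s ∈ c, s ⊆ ub := by
    intro c hcS hchain ⟨F0, hF0⟩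
    refine ⟨⋃₀ c, ⟨?_, ?_, ?_, ?_⟩, fun s hs => Set.subset_sUnion_of_mem hs⟩
    · exact ⟨F0, hF0, (hcS hF0).1⟩
    · rintro x ⟨F, hF, hxF⟩ y hxy
      exact ⟨F, hF, (hcS hF).2.1 hxF hxy⟩
    · rintro x ⟨F, hF, hxF⟩ y ⟨G, hG, hyG⟩
      rcases hchain.total hF hG with h | h
      · exact ⟨G, hG, (hcS hG).2.2.1 (h hxF) hyG⟩
      · exact ⟨F, hF, (hcS hF).2.2.1 hxF (h hyG)⟩
    · rintro ⟨F, hF, hbotF⟩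
      exact (hcS hF).2.2.2 hbotF
  obtain ⟨F, _, hFS, hFmax⟩ := zorn_subset_nonempty S hchain _ hbase
  have hup := hFS.2.1
  have hinf := hFS.2.2.1
  have hproper := hFS.2.2.2
  refine ⟨F, ⟨hup, hinf, hproper, ?_⟩, hFS.1⟩
  intro x y hxy
  by_contra hxor
  push_neg at hxor
  obtain ⟨hx, hy⟩ := hxor
  -- the filter generated by F and x is improper, similarly for y
  have key : ∀ z : B, z ∉ F → (x ⊔ y ∈ F) → z = x ∨ z = y → ∃ f ∈ F, f ⊓ z = ⊥ := by
    intro z hz _ _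
    by_contra hno
    push_neg at hno
    set F' : Set B := {w | ∃ f ∈ F, f ⊓ z ≤ w} with hF'
    have hFF' : F ⊆ F' := fun f hf => ⟨f, hf, inf_le_left⟩
    have hF'S : F' ∈ S := by
      refine ⟨hFF' hFS.1, ?_, ?_, ?_⟩
      · rintro u ⟨f, hf, hfu⟩ v huv
        exact ⟨f, hf, le_trans hfu huv⟩
      · rintro u ⟨f, hf, hfu⟩ v ⟨g, hg, hgv⟩
        exact ⟨f ⊓ g, hinf hf hg, by
          calc f ⊓ g ⊓ z ≤ (f ⊓ z) ⊓ (g ⊓ z) := by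
                refine le_inf (inf_le_inf_right z inf_le_left) (inf_le_inf_right z inf_le_right)
            _ ≤ u ⊓ v := inf_le_inf hfu hgv⟩
      · rintro ⟨f, hf, hfz⟩
        exact hno f hf (le_bot_iff.mp hfz)
    have : F' ⊆ F := hFmax hF'S hFF'
    have : F' = F := Set.Subset.antisymm this hFF'
    exact hz (this ▸ (⟨b, hFS.1, inf_le_right⟩ : z ∈ F'))
  obtain ⟨f1, hf1, hf1x⟩ := key x hx hxy (Or.inl rfl)
  obtain ⟨f2, hf2, hf2y⟩ := key y hy hxy (Or.inr rfl)
  have : f1 ⊓ f2 ⊓ (x ⊔ y) = ⊥ := by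
    rw [inf_sup_left]
    have h1 : f1 ⊓ f2 ⊓ x = ⊥ := by
      rw [← le_bot_iff, ← hf1x]
      exact inf_le_inf_right x inf_le_left
    have h2 : f1 ⊓ f2 ⊓ y = ⊥ := by
      rw [← le_bot_iff, ← hf2y]
      exact inf_le_inf_right y inf_le_right
    rw [h1, h2, bot_sup_eq]
  exact hproper (this ▸ hinf (hinf hf1 hf2) hxy)

theorem IsPrimeF.finsetSup {F : Set B} (hF : IsPrimeF F) {ι : Type*} (s : Finset ι)
    (f : ι → B) (h : s.sup f ∈ F) : ∃ i ∈ s, f i ∈ F := by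
  classical
  induction s using Finset.cons_induction with
  | empty => simp only [Finset.sup_empty] at h; exact absurd h hF.proper
  | cons a s ha ih =>
    rw [Finset.sup_cons] at h
    rcases hF.prime h with h | h
    · exact ⟨a, Finset.mem_cons_self a s, h⟩
    · obtain ⟨i, hi, hfi⟩ := ih h
      exact ⟨i, Finset.mem_cons_of_mem hi, hfi⟩

end Filters
section Chars
variable {E B : Type*} [SemilatticeInf E] [OrderBot E] [GeneralizedBooleanAlgebra B]

/-- The character induced by a prime filter. -/
noncomputable def chF (φ : E → B) (F : Set B) : E → Bool :=
  fun x => @decide (φ x ∈ F) (Classical.dec _)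

theorem chF_eq_true {φ : E → B} {F : Set B} {x : E} : chF φ F x = true ↔ φ x ∈ F := by
  simp [chF]

theorem chF_mem {X : Set (E × Finset E)} {φ : E → B}
    (hbot : φ ⊥ = ⊥) (hinf : ∀ x y : E, φ (x ⊓ y) = φ x ⊓ φ y)
    (hproper : ∀ b : B, ∃ s : Finset E, b ≤ s.sup φ)
    (hX : ∀ p ∈ X, φ p.1 = p.2.sup φ)
    {F : Set B} (hF : IsPrimeF F) (hne : F.Nonempty) :
    chF φ F ∈ XtoJoinChars X := by
  refine ⟨?_, ?_, ?_, ?_⟩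
  · rw [← Bool.not_eq_true, chF_eq_true, hbot]
    exact hF.proper
  · intro x y
    have : chF φ F (x ⊓ y) = true ↔ (chF φ F x && chF φ F y) = true := by
      rw [chF_eq_true, hinf, Bool.and_eq_true, chF_eq_true, chF_eq_true]
      exact ⟨fun h => ⟨hF.up h inf_le_left, hF.up h inf_le_right⟩,
        fun h => hF.inf_mem h.1 h.2⟩
    revert this
    cases chF φ F (x ⊓ y) <;> cases chF φ F x <;> cases chF φ F y <;> simp
  · obtain ⟨b, hb⟩ := hne
    obtain ⟨s, hs⟩ := hproper b
    obtain ⟨x, _, hx⟩ := hF.finsetSup s φ (hF.up hb hs)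
    exact ⟨x, chF_eq_true.mpr hx⟩
  · intro p hp
    rw [chF_eq_true, hX p hp]
    constructor
    · intro h
      obtain ⟨f, hf, hff⟩ := hF.finsetSup p.2 φ h
      exact ⟨f, hf, chF_eq_true.mpr hff⟩
    · rintro ⟨f, hf, hff⟩
      exact hF.up (chF_eq_true.mp hff) (Finset.le_sup hf)

/-- The graph of the Booleanization map: generated by `(M_a, φ a)` under
union/join, intersection/meet and difference. -/
inductive Gph (X : Set (E × Finset E)) (φ : E → B) :
    Set (XtoJoinChars X) → B → Prop
  | gen (a : E) : Gph X φ (Mset X a) (φ a)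
  | union {S T b c} : Gph X φ S b → Gph X φ T c → Gph X φ (S ∪ T) (b ⊔ c)
  | inter {S T b c} : Gph X φ S b → Gph X φ T c → Gph X φ (S ∩ T) (b ⊓ c)
  | sdiff {S T b c} : Gph X φ S b → Gph X φ T c → Gph X φ (S \ T) (b \ c)

theorem Gph.mem_iff {X : Set (E × Finset E)} {φ : E → B}
    (hbot : φ ⊥ = ⊥) (hinf : ∀ x y : E, φ (x ⊓ y) = φ x ⊓ φ y)
    (hproper : ∀ b : B, ∃ s : Finset E, b ≤ s.sup φ)
    (hX : ∀ p ∈ X, φ p.1 = p.2.sup φ)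
    {F : Set B} (hF : IsPrimeF F) (hne : F.Nonempty)
    {S : Set (XtoJoinChars X)} {b : B} (hG : Gph X φ S b) :
    (⟨chF φ F, chF_mem hbot hinf hproper hX hF hne⟩ : XtoJoinChars X) ∈ S ↔ b ∈ F := by
  induction hG with
  | gen a => exact chF_eq_true
  | union hS hT ihS ihT =>
    rw [Set.mem_union, ihS, ihT]
    exact ⟨fun h => h.elim (fun h => hF.up h le_sup_left) (fun h => hF.up h le_sup_right),
      fun h => hF.prime h⟩
  | inter hS hT ihS ihT =>
    rw [Set.mem_inter_iff, ihS, ihT]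
    exact ⟨fun h => hF.inf_mem h.1 h.2,
      fun h => ⟨hF.up h inf_le_left, hF.up h inf_le_right⟩⟩
  | sdiff hS hT ihS ihT =>
    rw [Set.mem_diff, ihS, ihT]
    constructor
    · rename_i S' T' b' c'
      rintro ⟨hb, hc⟩
      have : b' ⊓ c' ⊔ b' \ c' ∈ F := by
        rw [sup_inf_sdiff]; exact hb
      rcases hF.prime this with h | h
      · exact absurd (hF.up h inf_le_right) hc
      · exact h
    · intro h
      refine ⟨hF.up h sdiff_le, fun hc => ?_⟩
      have := hF.inf_mem h hc
      rw [inf_sdiff_self_left] at this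
      exact hF.proper this

theorem Gph.eq_bot {X : Set (E × Finset E)} {φ : E → B}
    (hbot : φ ⊥ = ⊥) (hinf : ∀ x y : E, φ (x ⊓ y) = φ x ⊓ φ y)
    (hproper : ∀ b : B, ∃ s : Finset E, b ≤ s.sup φ)
    (hX : ∀ p ∈ X, φ p.1 = p.2.sup φ)
    {S : Set (XtoJoinChars X)} {b : B} (hG : Gph X φ S b) (hS : S = ∅) : b = ⊥ := by
  by_contra hb
  obtain ⟨F, hF, hbF⟩ := exists_primeF b hb
  have := (Gph.mem_iff hbot hinf hproper hX hF ⟨b, hbF⟩ hG).mpr hbF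
  rw [hS] at this
  exact this

theorem Gph.unique {X : Set (E × Finset E)} {φ : E → B}
    (hbot : φ ⊥ = ⊥) (hinf : ∀ x y : E, φ (x ⊓ y) = φ x ⊓ φ y)
    (hproper : ∀ b : B, ∃ s : Finset E, b ≤ s.sup φ)
    (hX : ∀ p ∈ X, φ p.1 = p.2.sup φ)
    {S : Set (XtoJoinChars X)} {b c : B} (hb : Gph X φ S b) (hc : Gph X φ S c) : b = c := by
  have key : ∀ {S : Set (XtoJoinChars X)} {b c : B},
      Gph X φ S b → Gph X φ S c → b ≤ c := by
    intro S b c hb hc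
    rw [← sdiff_eq_bot_iff]
    by_contra hne
    obtain ⟨F, hF, hbF⟩ := exists_primeF _ hne
    have hneF : F.Nonempty := ⟨_, hbF⟩
    have hbmem : b ∈ F := hF.up hbF sdiff_le
    have hmem := (Gph.mem_iff hbot hinf hproper hX hF hneF hb).mpr hbmem
    have hcF : c ∈ F := (Gph.mem_iff hbot hinf hproper hX hF hneF hc).mp hmem
    have : b \ c ⊓ c ∈ F := hF.inf_mem hbF hcF
    rw [inf_sdiff_self_left] at this
    exact hF.proper this
  exact le_antisymm (key hb hc) (key hc hb)

end Chars
section Topology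
variable {E B : Type*} [SemilatticeInf E] [OrderBot E] [GeneralizedBooleanAlgebra B]

theorem finsetSup_bool {α : Type*} (s : Finset α) (f : α → Bool) :
    s.sup f = true ↔ ∃ a ∈ s, f a = true := by
  classical
  induction s using Finset.cons_induction with
  | empty => simp
  | cons a s ha ih =>
    rw [Finset.sup_cons]
    show (f a || s.sup f) = true ↔ _
    rw [Bool.or_eq_true, ih]
    simp [Finset.mem_cons, or_and_right, exists_or]

theorem continuous_finsetSup {α : Type*} (s : Finset α) :
    Continuous (fun f : α → Bool => s.sup f) := by
  classical
  induction s using Finset.cons_induction with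
  | empty => simpa using continuous_const
  | cons a s ha ih =>
    have : (fun f : α → Bool => (Finset.cons a s ha).sup f) =
        (fun p : Bool × Bool => p.1 ⊔ p.2) ∘ (fun f => (f a, s.sup f)) := by
      funext f; simp [Finset.sup_cons]
    rw [this]
    exact continuous_of_discreteTopology.comp ((continuous_apply a).prodMk ih)

/-- The closed "pre-character" space (characters plus the trivial map). -/
def Cset (X : Set (E × Finset E)) : Set (E → Bool) :=
  {f | f ⊥ = false ∧ (∀ x y : E, f (x ⊓ y) = (f x && f y)) ∧
    ∀ p ∈ X, (f p.1 = true ↔ ∃ q ∈ p.2, f q = true)}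

theorem isClosed_Cset (X : Set (E × Finset E)) : IsClosed (Cset X) := by
  have h1 : IsClosed {f : E → Bool | f ⊥ = false} := by
    show IsClosed ((fun f : E → Bool => f ⊥) ⁻¹' {false})
    exact IsClosed.preimage (continuous_apply (⊥ : E)) (isClosed_discrete _)
  have h2 : IsClosed {f : E → Bool | ∀ x y : E, f (x ⊓ y) = (f x && f y)} := by
    have : {f : E → Bool | ∀ x y : E, f (x ⊓ y) = (f x && f y)} =
        ⋂ (x : E) (y : E), {f : E → Bool | f (x ⊓ y) = (f x && f y)} := by
      ext f; simp [Set.mem_iInter]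
    rw [this]
    refine isClosed_iInter fun x => isClosed_iInter fun y => ?_
    refine isClosed_eq (continuous_apply _) ?_
    have : (fun f : E → Bool => (f x && f y)) =
        (fun p : Bool × Bool => p.1 && p.2) ∘ (fun f => (f x, f y)) := rfl
    rw [this]
    exact continuous_of_discreteTopology.comp ((continuous_apply x).prodMk (continuous_apply y))
  have h3 : IsClosed {f : E → Bool | ∀ p ∈ X, (f p.1 = true ↔ ∃ q ∈ p.2, f q = true)} := by
    have heq : {f : E → Bool | ∀ p ∈ X, (f p.1 = true ↔ ∃ q ∈ p.2, f q = true)} =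
        ⋂ (p : E × Finset E) (_ : p ∈ X), {f : E → Bool | f p.1 = p.2.sup f} := by
      ext f
      simp only [Set.mem_iInter, Set.mem_setOf_eq]
      refine forall_congr' fun p => forall_congr' fun hp => ?_
      rw [← finsetSup_bool p.2 f]
      cases hfp : f p.1 <;> cases hsup : p.2.sup f <;> simp [hfp, hsup]
    rw [heq]
    refine isClosed_iInter fun p => isClosed_iInter fun _ => ?_
    exact isClosed_eq (continuous_apply _) (continuous_finsetSup p.2)
  have : Cset X = ({f : E → Bool | f ⊥ = false} ∩
      {f : E → Bool | ∀ x y : E, f (x ⊓ y) = (f x && f y)}) ∩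
      {f : E → Bool | ∀ p ∈ X, (f p.1 = true ↔ ∃ q ∈ p.2, f q = true)} := by
    ext f; simp only [Cset, Set.mem_inter_iff, Set.mem_setOf_eq]; tauto
  rw [this]
  exact ((h1.inter h2).inter h3)

theorem isOpen_Mset (X : Set (E × Finset E)) (a : E) : IsOpen (Mset X a) := by
  have : Mset X a = (fun χ : XtoJoinChars X => (χ : E → Bool) a) ⁻¹' {true} := rfl
  rw [this]
  exact IsOpen.preimage ((continuous_apply a).comp continuous_subtype_val) (isOpen_discrete _)

theorem isClosed_Mset (X : Set (E × Finset E)) (a : E) : IsClosed (Mset X a) := by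
  have : Mset X a = (fun χ : XtoJoinChars X => (χ : E → Bool) a) ⁻¹' {true} := rfl
  rw [this]
  exact IsClosed.preimage ((continuous_apply a).comp continuous_subtype_val) (isClosed_discrete _)

theorem isCompact_Mset (X : Set (E × Finset E)) (a : E) : IsCompact (Mset X a) := by
  rw [(Topology.IsEmbedding.subtypeVal).isCompact_iff]
  have himg : Subtype.val '' (Mset X a) =
      Cset X ∩ {f : E → Bool | f a = true} := by
    ext f
    constructor
    · rintro ⟨χ, hχ, rfl⟩
      exact ⟨⟨χ.2.1, χ.2.2.1, χ.2.2.2.2⟩, hχ⟩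
    · rintro ⟨hf, hfa⟩
      exact ⟨⟨f, hf.1, hf.2.1, ⟨a, hfa⟩, hf.2.2⟩, hfa, rfl⟩
  rw [himg]
  refine IsClosed.isCompact ?_
  refine (isClosed_Cset X).inter ?_
  show IsClosed ((fun f : E → Bool => f a) ⁻¹' {true})
  exact IsClosed.preimage (continuous_apply a) (isClosed_discrete _)

theorem char_inf' {X : Set (E × Finset E)} {ψ : E → Bool} (hψ : ψ ∈ XtoJoinChars X)
    (s : Finset E) (hs : s.Nonempty) :
    ψ (s.inf' hs id) = true ↔ ∀ i ∈ s, ψ i = true := by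
  induction hs using Finset.Nonempty.cons_induction with
  | singleton a => simp
  | cons a s ha hs ih =>
    rw [Finset.inf'_cons (H := hs), hψ.2.1, Bool.and_eq_true, ih]
    simp only [Finset.mem_cons, id]
    constructor
    · rintro ⟨h1, h2⟩ i (rfl | hi)
      · exact h1
      · exact h2 i hi
    · intro h
      exact ⟨h a (Or.inl rfl), fun i hi => h i (Or.inr hi)⟩

end Topology
section Cover
variable {E B : Type*} [SemilatticeInf E] [OrderBot E] [GeneralizedBooleanAlgebra B]
variable {X : Set (E × Finset E)} {φ : E → B}

theorem Gph_empty (hbot : φ ⊥ = ⊥) : Gph X φ (∅ : Set (XtoJoinChars X)) ⊥ := by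
  have h1 : Mset X (⊥ : E) = (∅ : Set (XtoJoinChars X)) := by
    ext χ
    simp only [Mset, Set.mem_setOf_eq, Set.mem_empty_iff_false, iff_false]
    rw [χ.2.1]; simp
  have := Gph.gen (X := X) (φ := φ) (⊥ : E)
  rwa [h1, hbot] at this

theorem Gph_biUnion (hbot : φ ⊥ = ⊥) (t : Finset E) :
    Gph X φ (⋃ b ∈ t, Mset X b) (t.sup φ) := by
  classical
  induction t using Finset.cons_induction with
  | empty => simpa using Gph_empty hbot
  | cons a t ha ih =>
    have h := Gph.union (Gph.gen (X := X) (φ := φ) a) ih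
    have heq : (⋃ b ∈ Finset.cons a t ha, Mset X b) = Mset X a ∪ ⋃ b ∈ t, Mset X b := by
      ext χ; simp [Finset.mem_cons, or_and_right, exists_or]
    rw [heq, Finset.sup_cons]
    exact h

theorem Gph_finUnion {ι : Type*} (hbot : φ ⊥ = ⊥) (F : Finset ι)
    (f : ι → Set (XtoJoinChars X)) (h : ∀ i ∈ F, ∃ b, Gph X φ (f i) b) :
    ∃ b, Gph X φ (⋃ i ∈ F, f i) b := by
  classical
  induction F using Finset.cons_induction with
  | empty => exact ⟨⊥, by simpa using Gph_empty hbot⟩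
  | cons a F ha ih =>
    obtain ⟨b, hb⟩ := h a (Finset.mem_cons_self a F)
    obtain ⟨c, hc⟩ := ih fun i hi => h i (Finset.mem_cons_of_mem hi)
    refine ⟨b ⊔ c, ?_⟩
    have heq : (⋃ i ∈ Finset.cons a F ha, f i) = f a ∪ ⋃ i ∈ F, f i := by
      ext χ; simp [Finset.mem_cons, or_and_right, exists_or]
    rw [heq]
    exact Gph.union hb hc

theorem exists_gph (hbot : φ ⊥ = ⊥) (U : Set (XtoJoinChars X))
    (hUc : IsCompact U) (hUo : IsOpen U) : ∃ b, Gph X φ U b := by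
  classical
  obtain ⟨V, hVo, hVU⟩ := isOpen_induced_iff.mp hUo
  have key : ∀ χ : XtoJoinChars X, χ ∈ U → ∃ (a : E) (t : Finset E),
      χ ∈ Mset X a \ ⋃ b ∈ t, Mset X b ∧ (Mset X a \ ⋃ b ∈ t, Mset X b) ⊆ U := by
    intro χ hχ
    have hχV : (χ : E → Bool) ∈ V := by rw [← hVU] at hχ; exact hχ
    obtain ⟨I, u, hIu, hpi⟩ := isOpen_pi_iff.mp hVo _ hχV
    obtain ⟨x, hx⟩ := χ.2.2.2.1
    set s : Finset E := insert x (I.filter (fun i => (χ : E → Bool) i = true)) with hs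
    have hsne : s.Nonempty := ⟨x, Finset.mem_insert_self _ _⟩
    set t : Finset E := I.filter (fun i => (χ : E → Bool) i = false) with ht
    have hψs : ∀ ψ : XtoJoinChars X, ψ ∈ Mset X (s.inf' hsne id) →
        ∀ i ∈ s, (ψ : E → Bool) i = true := by
      intro ψ hψ
      exact (char_inf' ψ.2 s hsne).mp hψ
    refine ⟨s.inf' hsne id, t, ⟨?_, ?_⟩, ?_⟩
    · show (χ : E → Bool) _ = true
      rw [char_inf' χ.2 s hsne]
      intro i hi
      rcases Finset.mem_insert.mp hi with rfl | hi
      · exact hx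
      · exact (Finset.mem_filter.mp hi).2
    · intro hmem
      simp only [Set.mem_iUnion] at hmem
      obtain ⟨b, hb, hχb⟩ := hmem
      have hfalse := (Finset.mem_filter.mp hb).2
      have htrue : (χ : E → Bool) b = true := hχb
      rw [hfalse] at htrue
      exact Bool.false_ne_true htrue
    · rintro ψ ⟨hψa, hψt⟩
      have hmem : (ψ : E → Bool) ∈ (I : Set E).pi u := by
        intro i hiI
        have hiI' : i ∈ I := hiI
        have heqi : (ψ : E → Bool) i = (χ : E → Bool) i := by
          cases hχi : (χ : E → Bool) i with
          | true =>
            have hi_s : i ∈ s :=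
              Finset.mem_insert_of_mem (Finset.mem_filter.mpr ⟨hiI', hχi⟩)
            exact hψs ψ hψa i hi_s
          | false =>
            have hi_t : i ∈ t := Finset.mem_filter.mpr ⟨hiI', hχi⟩
            have hnot : ψ ∉ Mset X i := fun hm => hψt (Set.mem_biUnion hi_t hm)
            cases h : (ψ : E → Bool) i with
            | true => exact absurd h hnot
            | false => rfl
        rw [heqi]
        exact (hIu i hiI').2
      have : (ψ : E → Bool) ∈ V := hpi hmem
      rw [← hVU]
      exact this
  -- choose data for points of U
  choose! a t hmem hsub using key
  set N : XtoJoinChars X → Set (XtoJoinChars X) :=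
    fun χ => Mset X (a χ) \ ⋃ b ∈ t χ, Mset X b with hN
  have hNopen : ∀ χ : U, IsOpen (N χ) := by
    intro χ
    refine (isOpen_Mset X _).sdiff ?_
    exact Set.Finite.isClosed_biUnion (Finset.finite_toSet _)
      (fun b _ => isClosed_Mset X b)
  have hNcover : U ⊆ ⋃ χ : U, N (χ : XtoJoinChars X) := by
    intro ψ hψ
    exact Set.mem_iUnion.mpr ⟨⟨ψ, hψ⟩, hmem ψ hψ⟩
  obtain ⟨F, hF⟩ := hUc.elim_finite_subcover (fun χ : U => N (χ : XtoJoinChars X))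
    hNopen hNcover
  have hUeq : U = ⋃ i ∈ F, N ((i : U) : XtoJoinChars X) := by
    refine Set.Subset.antisymm hF ?_
    intro ψ hψ
    simp only [Set.mem_iUnion] at hψ
    obtain ⟨i, _, hi⟩ := hψ
    exact hsub (i : XtoJoinChars X) i.2 hi
  rw [hUeq]
  refine Gph_finUnion hbot F _ ?_
  intro i _
  exact ⟨φ (a (i : XtoJoinChars X)) \ (t (i : XtoJoinChars X)).sup φ,
    Gph.sdiff (Gph.gen _) (Gph_biUnion hbot _)⟩

end Cover
section Main
variable {E B : Type*} [SemilatticeInf E] [OrderBot E] [GeneralizedBooleanAlgebra B]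
variable {X : Set (E × Finset E)} {φ : E → B}

theorem Gph.compactOpen {S : Set (XtoJoinChars X)} {b : B}
    (hG : Gph X φ S b) : IsCompact S ∧ IsOpen S := by
  induction hG with
  | gen a => exact ⟨isCompact_Mset X a, isOpen_Mset X a⟩
  | union hS hT ihS ihT => exact ⟨ihS.1.union ihT.1, ihS.2.union ihT.2⟩
  | inter hS hT ihS ihT => exact ⟨ihS.1.inter_right ihT.1.isClosed, ihS.2.inter ihT.2⟩
  | sdiff hS hT ihS ihT =>
    refine ⟨?_, ihS.2.sdiff ihT.1.isClosed⟩
    rw [Set.diff_eq]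
    exact ihS.1.inter_right ihT.2.isClosed_compl

end Main


/-- Theorem 3.3.  For every `X`-to-join representation `φ : E → B` there is
a unique map `ψ` from the compact opens of `Ê_X` to `B` preserving `∅`, unions,
intersections and differences and sending `M_a` to `φ a`; moreover this `ψ` is proper. -/
theorem statement2 {E B : Type*} [SemilatticeInf E] [OrderBot E]
    [GeneralizedBooleanAlgebra B]
    (X : Set (E × Finset E)) (φ : E → B)
    (hbot : φ ⊥ = ⊥)
    (hinf : ∀ x y : E, φ (x ⊓ y) = φ x ⊓ φ y)
    (hproper : ∀ b : B, ∃ s : Finset E, b ≤ s.sup φ)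
    (hX : ∀ p ∈ X, φ p.1 = p.2.sup φ) :
    ∃ ψ : CompactOpens X → B,
      IsBooleanizationMap X φ ψ ∧
      (∀ b : B, ∃ U : CompactOpens X, b ≤ ψ U) ∧
      ∀ ψ' : CompactOpens X → B, IsBooleanizationMap X φ ψ' → ψ' = ψ := by
  classical
  have hgph : ∀ U : CompactOpens X, ∃ b, Gph X φ U.1 b :=
    fun U => exists_gph hbot U.1 U.2.1 U.2.2
  choose ψ hψ using hgph
  have huniq : ∀ {S : Set (XtoJoinChars X)} {b c : B},
      Gph X φ S b → Gph X φ S c → b = c :=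
    fun h1 h2 => Gph.unique hbot hinf hproper hX h1 h2
  refine ⟨ψ, ⟨?_, ?_, ?_, ?_, ?_⟩, ?_, ?_⟩
  · intro W hW
    have h := hψ W; rw [hW] at h
    exact huniq h (Gph_empty hbot)
  · intro U V W hW
    have h := hψ W; rw [hW] at h
    exact huniq h (Gph.union (hψ U) (hψ V))
  · intro U V W hW
    have h := hψ W; rw [hW] at h
    exact huniq h (Gph.inter (hψ U) (hψ V))
  · intro U V W hW
    have h := hψ W; rw [hW] at h
    exact huniq h (Gph.sdiff (hψ U) (hψ V))
  · intro a W hW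
    have h := hψ W; rw [hW] at h
    exact huniq h (Gph.gen a)
  · intro b
    obtain ⟨s, hs⟩ := hproper b
    have hcomp : IsCompact (⋃ a ∈ s, Mset X a) :=
      s.finite_toSet.isCompact_biUnion (fun a _ => isCompact_Mset X a)
    have hopen : IsOpen (⋃ a ∈ s, Mset X a) :=
      isOpen_biUnion (fun a _ => isOpen_Mset X a)
    refine ⟨⟨⋃ a ∈ s, Mset X a, hcomp, hopen⟩, ?_⟩
    have h := hψ ⟨⋃ a ∈ s, Mset X a, hcomp, hopen⟩
    have heq := huniq h (Gph_biUnion hbot s)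
    rw [heq]
    exact hs
  · intro ψ' hψ'
    funext U
    have core : ∀ (S : Set (XtoJoinChars X)) (b : B), Gph X φ S b →
        ∀ W : CompactOpens X, W.1 = S → ψ' W = b := by
      intro S b hG
      induction hG with
      | gen a => exact fun W hW => hψ'.2.2.2.2 a W hW
      | union hS hT ihS ihT =>
        rename_i S' T' b' c'
        intro W hW
        set U0 : CompactOpens X := ⟨S', (Gph.compactOpen hS).1, (Gph.compactOpen hS).2⟩
        set V0 : CompactOpens X := ⟨T', (Gph.compactOpen hT).1, (Gph.compactOpen hT).2⟩
        have hU : ψ' U0 = b' := ihS U0 rfl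
        have hV : ψ' V0 = c' := ihT V0 rfl
        rw [hψ'.2.1 U0 V0 W hW, hU, hV]
      | inter hS hT ihS ihT =>
        rename_i S' T' b' c'
        intro W hW
        set U0 : CompactOpens X := ⟨S', (Gph.compactOpen hS).1, (Gph.compactOpen hS).2⟩
        set V0 : CompactOpens X := ⟨T', (Gph.compactOpen hT).1, (Gph.compactOpen hT).2⟩
        have hU : ψ' U0 = b' := ihS U0 rfl
        have hV : ψ' V0 = c' := ihT V0 rfl
        rw [hψ'.2.2.1 U0 V0 W hW, hU, hV]
      | sdiff hS hT ihS ihT =>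
        rename_i S' T' b' c'
        intro W hW
        set U0 : CompactOpens X := ⟨S', (Gph.compactOpen hS).1, (Gph.compactOpen hS).2⟩
        set V0 : CompactOpens X := ⟨T', (Gph.compactOpen hT).1, (Gph.compactOpen hT).2⟩
        have hU : ψ' U0 = b' := ihS U0 rfl
        have hV : ψ' V0 = c' := ihT V0 rfl
        rw [hψ'.2.2.2.1 U0 V0 W hW, hU, hV]
    exact core U.1 (ψ U) (hψ U) U rfl
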